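/- Let C be an alphabet and n ∈ ℕ, and let u, v be words over C with lengths multiples of n. If Δ_{C,n}(u) < ε and Δ_{C,n}(uv) < ε, then Δ_{C,n}(v) < ((|uv|+|u|)/|v|)·ε. -/

import Mathlib

open Filter Topology

/-- Number of aligned occurrences of `v` in `u` (at positions ≡ 1 mod |v|). -/
def alocc {α : Type*} [DecidableEq α] (u v : List α) : ℕ :=
  ((List.range (u.length / v.length)).filter
    (fun i => decide ((u.drop (i * v.length)).take v.length = v))).length

/-- Number of (not necessarily aligned, possibly overlapping) occurrences of `v` in `u`. -/
def occCount {α : Type*} [DecidableEq α] (u v : List α) : ℕ :=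
  ((List.range (u.length + 1 - v.length)).filter
    (fun i => decide ((u.drop i).take v.length = v))).length

/-- The `i`-th word of length `n` over `{0,...,b}` in lexicographic order
(the base-`b+1` digits of `i`, most significant first). -/
def lexWord (b n i : ℕ) : List (Fin (b + 1)) :=
  (List.range n).map (fun j => ⟨i / (b + 1) ^ (n - 1 - j) % (b + 1), Nat.mod_lt _ (Nat.succ_pos b)⟩)

/-- The Champernowne-like word `w_n`: the concatenation in lexicographic order of all
words of length `n` over the alphabet `{0,...,b}`. -/
def champ (b n : ℕ) : List (Fin (b + 1)) :=
  ((List.range ((b + 1) ^ n)).map (lexWord b n)).flatten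

/-- `ℓ_n`: the number of symbols of `w_n` different from `b`. -/
def elln (b n : ℕ) : ℕ := (champ b n).countP (fun x => decide ((x : ℕ) ≠ b))

/-- The reduction operator: removes all occurrences of the symbol `b`. -/
def red (b : ℕ) (v : List (Fin (b + 1))) : List (Fin b) :=
  v.filterMap (fun x => if h : (x : ℕ) < b then some ⟨(x : ℕ), h⟩ else none)

/-- The wildcard operator: replaces every symbol different from `b` by a wildcard.
`true` encodes the symbol `b` and `false` encodes the wildcard `⋆`. -/
def wc (b : ℕ) (v : List (Fin (b + 1))) : List Bool :=
  v.map (fun x => decide ((x : ℕ) = b))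

/-- Expansion of a word `v` over `{0,...,b-1}` along a pattern `p` over `{0,...,b}`:
positions where `p` has the symbol `b` get `b`, the other positions are filled
with the symbols of `v` in order. -/
def expandAux (b : ℕ) : List (Fin (b + 1)) → List (Fin b) → List (Fin (b + 1))
  | [], _ => []
  | c :: cs, v =>
    if (c : ℕ) = b then c :: expandAux b cs v
    else match v with
      | [] => []
      | x :: xs => x.castSucc :: expandAux b cs xs

def expandBlocks (b n : ℕ) : ℕ → List (Fin b) → List (Fin (b + 1))
  | 0, _ => []
  | k + 1, v =>
      expandAux b (champ b n) (v.take (elln b n)) ++ expandBlocks b n k (v.drop (elln b n))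

/-- The expansion `e_n`, defined blockwise on words whose length is a multiple of `ℓ_n`. -/
def expand (b n : ℕ) (v : List (Fin b)) : List (Fin (b + 1)) :=
  expandBlocks b n (v.length / elln b n) v

/-- The prefix of length `n` of an infinite word. -/
def pref {α : Type*} (u : ℕ → α) (n : ℕ) : List α := (List.range n).map u


lemma alocc_le {α : Type*} [DecidableEq α] (u w : List α) :
    alocc u w ≤ u.length / w.length := by
  calc _ ≤ (List.range (u.length / w.length)).length := List.length_filter_le _ _
  _ = _ := List.length_range

lemma alocc_append {α : Type*} [DecidableEq α] (u v w : List α)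
    (hw : 0 < w.length) (hu : w.length ∣ u.length) :
    alocc (u ++ v) w = alocc u w + alocc v w := by
  unfold alocc
  rw [List.length_append, Nat.add_div_of_dvd_right hu, List.range_add,
    List.filter_append, List.length_append, List.filter_map, List.length_map]
  congr 1
  · congr 1
    apply List.filter_congr
    intro i hi
    rw [List.mem_range] at hi
    have hle : (i + 1) * w.length ≤ u.length := by
      obtain ⟨A, hA⟩ := hu
      have : i + 1 ≤ A := by
        rw [hA, Nat.mul_div_cancel_left _ hw] at hi; omega
      calc (i+1) * w.length ≤ A * w.length := Nat.mul_le_mul_right _ this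
      _ = u.length := by rw [hA, mul_comm]
    rw [add_mul, one_mul] at hle
    have h1 : i * w.length ≤ u.length := by omega
    rw [List.drop_append_of_le_length h1, List.take_append_of_le_length]
    rw [List.length_drop]
    omega
  · congr 1
    apply List.filter_congr
    intro i hi
    have h : (u.length / w.length + i) * w.length = u.length + i * w.length := by
      rw [add_mul, Nat.div_mul_cancel hu]
    simp only [Function.comp_apply, h, List.drop_append, Nat.add_sub_cancel_left,
      List.drop_eq_nil_of_le (Nat.le_add_right u.length (i * w.length)), List.nil_append]

theorem stmt9 (k n : ℕ) (hk : 0 < k) (hn : 0 < n) (u v : List (Fin k))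
    (hu : n ∣ u.length) (hv : n ∣ v.length) (hvne : v ≠ []) (ε : ℝ)
    (h1 : ∀ w : List (Fin k), w.length = n →
      |(alocc u w : ℝ) / ((u.length / n : ℕ) : ℝ) - 1 / (k : ℝ) ^ n| < ε)
    (h2 : ∀ w : List (Fin k), w.length = n →
      |(alocc (u ++ v) w : ℝ) / (((u ++ v).length / n : ℕ) : ℝ) - 1 / (k : ℝ) ^ n| < ε) :
    ∀ w : List (Fin k), w.length = n →
      |(alocc v w : ℝ) / ((v.length / n : ℕ) : ℝ) - 1 / (k : ℝ) ^ n|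
        < ((((u ++ v).length + u.length : ℕ) : ℝ) / (v.length : ℝ)) * ε := by
  intro w hw
  obtain ⟨A, hA⟩ := hu
  obtain ⟨B, hB⟩ := hv
  have hB0 : 0 < B := by
    rcases Nat.eq_zero_or_pos B with h | h
    · exact absurd (List.length_eq_zero_iff.mp (by rw [hB, h, mul_zero])) hvne
    · exact h
  have hwpos : 0 < w.length := by omega
  have hsplit : alocc (u ++ v) w = alocc u w + alocc v w :=
    alocc_append u v w hwpos (by rw [hw]; exact ⟨A, hA⟩)
  have hAq : u.length / n = A := by rw [hA, Nat.mul_div_cancel_left _ hn]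
  have hBq : v.length / n = B := by rw [hB, Nat.mul_div_cancel_left _ hn]
  have hABq : (u ++ v).length / n = A + B := by
    rw [List.length_append, hA, hB, ← mul_add, Nat.mul_div_cancel_left _ hn]
  specialize h1 w hw
  specialize h2 w hw
  rw [hAq] at h1
  rw [hABq, hsplit] at h2
  rw [hBq]
  have hale : (alocc u w : ℝ) ≤ (A : ℝ) := by
    have := alocc_le u w
    rw [hw, hAq] at this
    exact_mod_cast this
  set p : ℝ := 1 / (k : ℝ) ^ n with hp
  set a : ℝ := (alocc u w : ℝ) with ha
  set b : ℝ := (alocc v w : ℝ) with hb'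
  have hεpos : 0 < ε := lt_of_le_of_lt (abs_nonneg _) h2
  have hBR : (0:ℝ) < (B:ℝ) := by exact_mod_cast hB0
  have hRHS : ((((u ++ v).length + u.length : ℕ) : ℝ) / (v.length : ℝ))
      = (2 * A + B) / B := by
    rw [List.length_append, hA, hB]
    have hnR : (0:ℝ) < (n:ℝ) := by exact_mod_cast hn
    push_cast
    field_simp
    ring
  rw [hRHS]
  have h2' : (alocc u w + alocc v w : ℕ) = (a + b : ℝ) ∨ True := Or.inr trivial
  have hcast : ((alocc u w + alocc v w : ℕ) : ℝ) = a + b := by push_cast; rfl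
  rw [hcast] at h2
  push_cast at h2
  by_cases hA0 : A = 0
  · have ha0 : a = 0 := le_antisymm (by rw [hA0] at hale; exact_mod_cast hale)
      (by positivity)
    rw [hA0] at h2
    rw [ha0, zero_add, Nat.cast_zero, zero_add] at h2
    have : (2 * (A:ℝ) + B) / B * ε = ε := by
      rw [hA0]; push_cast; rw [mul_zero, zero_add, div_self (ne_of_gt hBR), one_mul]
    rw [this]
    exact h2
  · have hAR : (0:ℝ) < (A:ℝ) := by
      have : 0 < A := Nat.pos_of_ne_zero hA0
      exact_mod_cast this
    have e1 : |a - A * p| < A * ε := by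
      have : a - A * p = (A:ℝ) * (a / A - p) := by field_simp
      rw [this, abs_mul, abs_of_pos hAR]
      exact mul_lt_mul_of_pos_left h1 hAR
    have e2 : |a + b - (A + B) * p| < (A + B) * ε := by
      have hABR : (0:ℝ) < (A:ℝ) + B := by positivity
      have : a + b - ((A:ℝ) + B) * p = ((A:ℝ) + B) * ((a + b) / (A + B) - p) := by
        field_simp
      rw [this, abs_mul, abs_of_pos hABR]
      exact mul_lt_mul_of_pos_left h2 hABR
    have e3 : |b - B * p| < (2 * A + B) * ε := by
      have hid : b - (B:ℝ) * p = (a + b - ((A:ℝ) + B) * p) - (a - A * p) := by ring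
      calc |b - (B:ℝ) * p| ≤ |a + b - ((A:ℝ) + B) * p| + |a - A * p| := by
            rw [hid]; exact abs_sub _ _
      _ < (A + B) * ε + A * ε := add_lt_add e2 e1
      _ = (2 * A + B) * ε := by ring
    have : b / B - p = (b - B * p) / B := by field_simp
    rw [this, abs_div, abs_of_pos hBR, div_lt_iff₀ hBR]
    calc |b - (B:ℝ) * p| < (2 * A + B) * ε := e3
    _ = (2 * (A:ℝ) + B) / B * ε * B := by field_simp
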